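/- For all κ_f ∈ (0,1] and κ^g ∈ [0,1]: min{1 − κ_f/e, 1 − κ^g} ≥ (1/κ_f)·(1 − e^{−(1−κ^g)·κ_f}). That is, the distorted-greedy approximation ratio for BP maximization dominates the vanilla greedy approximation ratio of Bai–Bilmes. -/

import Mathlib

open Real

private lemma taylor4 (y : ℝ) (hy : |y| ≤ 1) :
    |Real.exp y - (1 + y + y^2/2 + y^3/6)| ≤ |y|^4 * (5/96) := by
  have h := Real.exp_bound hy (n := 4) (by norm_num)
  have hs : ∑ m ∈ Finset.range 4, y ^ m / m.factorial = 1 + y + y^2/2 + y^3/6 := by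
    simp [Finset.sum_range_succ, Nat.factorial]
  rw [hs] at h
  convert h using 2
  norm_num [Nat.factorial]

private lemma key (x : ℝ) (hx0 : 0 ≤ x) (hx1 : x ≤ 1) :
    1 - x + x^2 / Real.exp 1 ≤ Real.exp (-x) := by
  have he1 : (2.7182818283 : ℝ) < Real.exp 1 := Real.exp_one_gt_d9
  have he2 : Real.exp 1 < 2.7182818286 := Real.exp_one_lt_d9
  have hepos : (0:ℝ) < Real.exp 1 := Real.exp_pos 1
  rcases le_or_gt x (1/2) with hc | hc
  · -- use Taylor at -x
    have hb := taylor4 (-x) (by rw [abs_neg, abs_of_nonneg hx0]; exact hx1)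
    rw [abs_sub_le_iff] at hb
    have h1 := hb.2
    rw [abs_neg, abs_of_nonneg hx0] at h1
    have hlow : 1 - x + x^2/2 - x^3/6 - x^4 * (5/96) ≤ Real.exp (-x) := by nlinarith
    have h2 : x^2 / Real.exp 1 ≤ x^2/2 - x^3/6 - x^4*(5/96) := by
      rw [div_le_iff₀ hepos]
      nlinarith [mul_nonneg (sq_nonneg x) (by linarith : (0:ℝ) ≤ 1/2 - x),
        mul_nonneg (mul_nonneg (sq_nonneg x) hx0) (by linarith : (0:ℝ) ≤ 1/2 - x),
        mul_nonneg (sub_nonneg.mpr he1.le) (sq_nonneg x), sq_nonneg x,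
        mul_nonneg (sub_nonneg.mpr he1.le) (mul_nonneg (sq_nonneg x) (by linarith : (0:ℝ) ≤ 1/2 - x))]
    linarith
  · -- x ∈ (1/2, 1]; set t = 1 - x
    set t := 1 - x with ht
    have ht0 : 0 ≤ t := by simp [ht]; linarith
    have ht1 : t ≤ 1/2 := by simp [ht]; linarith
    have hb := taylor4 t (by rw [abs_of_nonneg ht0]; linarith)
    rw [abs_sub_le_iff] at hb
    have h1 := hb.2
    rw [abs_of_nonneg ht0] at h1
    have hgoal : Real.exp 1 * t + (1 - t)^2 ≤ Real.exp t := by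
      nlinarith [mul_nonneg ht0 (by linarith : (0:ℝ) ≤ 1/2 - t),
        mul_nonneg (mul_nonneg ht0 ht0) (by linarith : (0:ℝ) ≤ 1/2 - t),
        mul_nonneg (mul_nonneg (mul_nonneg ht0 ht0) ht0) (by linarith : (0:ℝ) ≤ 1/2 - t),
        mul_nonneg (by linarith : (0:ℝ) ≤ 3 - Real.exp 1) ht0,
        mul_nonneg ht0 ht0]
    have hexp : Real.exp (-x) = Real.exp t / Real.exp 1 := by
      rw [eq_div_iff hepos.ne', ← Real.exp_add]; ring_nf; rfl
    rw [hexp, le_div_iff₀ hepos]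
    have hdm : x^2 / Real.exp 1 * Real.exp 1 = x^2 := div_mul_cancel₀ _ hepos.ne'
    have hxt : x = 1 - t := by rw [ht]; ring
    nlinarith [hgoal, hdm]

theorem stmt_15 (κf κg : ℝ) (hκf0 : 0 < κf) (hκf1 : κf ≤ 1)
    (hκg0 : 0 ≤ κg) (hκg1 : κg ≤ 1) :
    min (1 - κf / Real.exp 1) (1 - κg)
      ≥ (1 / κf) * (1 - Real.exp (-(1 - κg) * κf)) := by
  rw [ge_iff_le, le_min_iff]
  have hepos : (0:ℝ) < Real.exp 1 := Real.exp_pos 1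
  constructor
  · have hmono : Real.exp (-κf) ≤ Real.exp (-(1 - κg) * κf) := by
      apply Real.exp_le_exp.mpr
      nlinarith
    have hk := key κf hκf0.le hκf1
    rw [one_div, inv_mul_le_iff₀ hκf0]
    have hd : κf^2 / Real.exp 1 = (κf / Real.exp 1) * κf := by ring
    nlinarith [hk, hmono]
  · have h := Real.add_one_le_exp (-(1 - κg) * κf)
    rw [one_div, inv_mul_le_iff₀ hκf0]
    nlinarith
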